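/- Let L be a finite field of characteristic p and order q, and let s be an invertible exponent (gcd(s, q-1) = 1). Then all Weil sums W(a) = Σ_{x∈L} μ(x^s - ax) lie in ℤ if and only if s ≡ 1 (mod p-1). -/

import Mathlib

open Finset

/-- The canonical additive character of a finite field of characteristic `p`:
`μ(x) = exp(2πi · Tr(x)/p)` where `Tr` is the absolute trace to `F_p`. -/
noncomputable def mu (p : ℕ) {L : Type*} [Field L] [Fintype L] [Algebra (ZMod p) L] (x : L) : ℂ :=
  Complex.exp (2 * Real.pi * Complex.I * ((Algebra.trace (ZMod p) L x).val : ℂ) / p)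

set_option linter.unusedSectionVars false

section WeilAux

open Polynomial

variable (p : ℕ) [Fact p.Prime]

/-- The primitive `p`-th root of unity `exp(2πi/p)`. -/
noncomputable def zetaC : ℂ := Complex.exp (2 * Real.pi * Complex.I / p)

lemma zetaC_prim : IsPrimitiveRoot (zetaC p) p :=
  Complex.isPrimitiveRoot_exp p (Nat.Prime.ne_zero Fact.out)

/-- `ζ^(j.val)` as a function of `j : ZMod p`. -/
noncomputable def Zc (j : ZMod p) : ℂ := zetaC p ^ j.val

lemma zetaC_pow_mod (n : ℕ) : zetaC p ^ (n % p) = zetaC p ^ n := by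
  conv_rhs => rw [← Nat.div_add_mod n p]
  rw [pow_add, pow_mul, (zetaC_prim p).pow_eq_one, one_pow, one_mul]

lemma Zc_add (u v : ZMod p) : Zc p (u + v) = Zc p u * Zc p v := by
  rw [Zc, Zc, Zc, ← pow_add, ZMod.val_add, zetaC_pow_mod]

lemma Zc_zero : Zc p 0 = 1 := by
  rw [Zc, ZMod.val_zero, pow_zero]

lemma Zc_one : Zc p 1 = zetaC p := by
  have : NeZero p := ⟨(Fact.out : p.Prime).ne_zero⟩
  rw [Zc, ZMod.val_one_eq_one_mod, Nat.one_mod_eq_one.mpr (Fact.out : p.Prime).one_lt.ne',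
    pow_one]

lemma mu_eq_Zc {L : Type*} [Field L] [Fintype L] [Algebra (ZMod p) L]
    (x : L) : mu p x = Zc p (Algebra.trace (ZMod p) L x) := by
  rw [mu, Zc, zetaC, ← Complex.exp_nat_mul]
  congr 1
  ring

lemma sum_zmod_eq_sum_range (f : ℕ → ℂ) :
    ∑ j : ZMod p, f (ZMod.val j) = ∑ i ∈ Finset.range p, f i := by
  have : NeZero p := ⟨(Fact.out : p.Prime).ne_zero⟩
  apply Finset.sum_nbij' (fun j => ZMod.val j) (fun i => (i : ZMod p))
  · intro a _; exact Finset.mem_range.mpr (ZMod.val_lt a)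
  · intro a _; exact Finset.mem_univ _
  · intro a _; exact ZMod.natCast_rightInverse a
  · intro i hi; exact ZMod.val_cast_of_lt (Finset.mem_range.mp hi)
  · intro a _; rfl

lemma sum_Zc : ∑ j : ZMod p, Zc p j = 0 := by
  rw [show (∑ j : ZMod p, Zc p j) = ∑ j : ZMod p, (fun n => zetaC p ^ n) (ZMod.val j) from rfl,
    sum_zmod_eq_sum_range]
  exact (zetaC_prim p).geom_sum_eq_zero (Fact.out : p.Prime).one_lt

lemma sum_Zc_erase : ∑ j ∈ Finset.univ.erase (0 : ZMod p), Zc p j = -1 := by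
  have h := sum_Zc p
  rw [← Finset.add_sum_erase Finset.univ (Zc p) (Finset.mem_univ 0), Zc_zero] at h
  linear_combination h

lemma range_coeffs_const (c : ℕ → ℤ)
    (h : ∑ i ∈ Finset.range p, (c i : ℂ) * zetaC p ^ i = 0) :
    ∀ i < p, ∀ k < p, c i = c k := by
  have hppos : 0 < p := (Fact.out : p.Prime).pos
  set P : ℚ[X] := ∑ i ∈ Finset.range p, C (c i : ℚ) * X ^ i with hP
  have hcoeff : ∀ i < p, P.coeff i = (c i : ℚ) := by
    intro i hi
    rw [hP, finset_sum_coeff]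
    rw [Finset.sum_eq_single i]
    · simp
    · intro b _ hb; simp [coeff_C_mul, coeff_X_pow, Ne.symm hb]
    · intro hnot; exact absurd (Finset.mem_range.mpr hi) hnot
  have haeval : aeval (zetaC p) P = 0 := by
    rw [hP, map_sum]
    rw [← h]
    apply Finset.sum_congr rfl
    intro i _
    simp [aeval_C, aeval_X_pow]
  have hdvd : cyclotomic p ℚ ∣ P := by
    rw [cyclotomic_eq_minpoly_rat (zetaC_prim p) hppos]
    exact minpoly.dvd ℚ (zetaC p) haeval
  obtain ⟨Q, hQ⟩ := hdvd
  by_cases hP0 : P = 0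
  · intro i hi k hk
    have h1 := hcoeff i hi; have h2 := hcoeff k hk
    rw [hP0, coeff_zero] at h1 h2
    exact_mod_cast h1.symm.trans h2
  · have hcyc0 : cyclotomic p ℚ ≠ 0 := cyclotomic_ne_zero p ℚ
    have hQ0 : Q ≠ 0 := by rintro rfl; simp at hQ; exact hP0 hQ
    have hdegP : P.natDegree ≤ p - 1 := by
      apply natDegree_sum_le_of_forall_le
      intro i hi
      refine (natDegree_C_mul_le _ _).trans ?_
      rw [natDegree_X_pow]
      have := Finset.mem_range.mp hi
      omega
    have hdegc : (cyclotomic p ℚ).natDegree = p - 1 := by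
      rw [natDegree_cyclotomic, Nat.totient_prime Fact.out]
    have hdegQ : Q.natDegree = 0 := by
      have := natDegree_mul hcyc0 hQ0
      rw [← hQ, hdegc] at this
      omega
    obtain ⟨a, ha⟩ := natDegree_eq_zero.mp hdegQ
    have hPa : P = C a * ∑ i ∈ Finset.range p, X ^ i := by
      rw [hQ, ← ha, ← cyclotomic_prime ℚ p]; ring
    have hc2 : ∀ i < p, P.coeff i = a := by
      intro i hi
      rw [hPa, coeff_C_mul, finset_sum_coeff]
      rw [Finset.sum_eq_single i]
      · simp
      · intro b _ hb; simp [coeff_X_pow, Ne.symm hb]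
      · intro hnot; exact absurd (Finset.mem_range.mpr hi) hnot
    intro i hi k hk
    have h1 := (hcoeff i hi).symm.trans (hc2 i hi)
    have h2 := (hcoeff k hk).symm.trans (hc2 k hk)
    exact_mod_cast h1.trans h2.symm

lemma coeffs_const (c : ZMod p → ℤ)
    (h : ∑ j : ZMod p, (c j : ℂ) * Zc p j = 0) : ∀ j k : ZMod p, c j = c k := by
  have : NeZero p := ⟨(Fact.out : p.Prime).ne_zero⟩
  have hre : ∑ i ∈ Finset.range p, (c (i : ZMod p) : ℂ) * zetaC p ^ i = 0 := by
    rw [← h]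
    rw [← sum_zmod_eq_sum_range p (fun n => (c ((n : ℕ) : ZMod p) : ℂ) * zetaC p ^ n)]
    apply Finset.sum_congr rfl
    intro j _
    rw [ZMod.natCast_rightInverse j]
    rfl
  intro j k
  have := range_coeffs_const p (fun i => c (i : ZMod p)) hre j.val (ZMod.val_lt j) k.val
    (ZMod.val_lt k)
  simpa [ZMod.natCast_rightInverse j, ZMod.natCast_rightInverse k] using this

variable (L : Type*) [Field L] [Fintype L] [CharP L p] [Algebra (ZMod p) L]

lemma exists_trace_one : ∃ z : L, Algebra.trace (ZMod p) L z = 1 := by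
  have : FiniteDimensional (ZMod p) L := Module.Finite.of_finite
  exact Algebra.trace_surjective (ZMod p) L 1

lemma trace_algebraMap_mul (c : ZMod p) (x : L) :
    Algebra.trace (ZMod p) L (algebraMap (ZMod p) L c * x) = c * Algebra.trace (ZMod p) L x := by
  rw [← Algebra.smul_def, map_smul, smul_eq_mul]

lemma orth (y : L) (hy : y ≠ 0) :
    ∑ a : L, Zc p (Algebra.trace (ZMod p) L (a * y)) = 0 := by
  obtain ⟨z, hz⟩ := exists_trace_one p L
  set S := ∑ a : L, Zc p (Algebra.trace (ZMod p) L (a * y)) with hS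
  have key : S = zetaC p * S := by
    calc S = ∑ a : L, Zc p (Algebra.trace (ZMod p) L ((a + z * y⁻¹) * y)) :=
          (Fintype.sum_equiv (Equiv.addRight (z * y⁻¹))
            (fun a => Zc p (Algebra.trace (ZMod p) L ((a + z * y⁻¹) * y)))
            (fun a => Zc p (Algebra.trace (ZMod p) L (a * y))) (fun a => rfl)).symm
      _ = ∑ a : L, zetaC p * Zc p (Algebra.trace (ZMod p) L (a * y)) := by
          apply Finset.sum_congr rfl
          intro a _
          have hxy : (a + z * y⁻¹) * y = a * y + z := by field_simp
          rw [hxy, map_add, hz, Zc_add, Zc_one, mul_comm]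
      _ = zetaC p * S := by rw [← Finset.mul_sum]
  have hne : zetaC p ≠ 1 := (zetaC_prim p).ne_one (Fact.out : p.Prime).one_lt
  have : (1 - zetaC p) * S = 0 := by linear_combination key
  rcases mul_eq_zero.mp this with h | h
  · exact absurd (show zetaC p = 1 by linear_combination -h) hne
  · exact h

/-- The Fourier computation: `∑ a, W(a) μ(a c) = q μ(c^s)`. -/
lemma fourierW (s : ℕ) (cc : L) :
    ∑ a : L, (∑ x : L, Zc p (Algebra.trace (ZMod p) L (x ^ s - a * x))) *
        Zc p (Algebra.trace (ZMod p) L (a * cc)) =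
      (Fintype.card L : ℂ) * Zc p (Algebra.trace (ZMod p) L (cc ^ s)) := by
  have step1 : ∀ a x : L,
      Zc p (Algebra.trace (ZMod p) L (x ^ s - a * x)) *
        Zc p (Algebra.trace (ZMod p) L (a * cc)) =
      Zc p (Algebra.trace (ZMod p) L (x ^ s)) *
        Zc p (Algebra.trace (ZMod p) L (a * (cc - x))) := by
    intro a x
    rw [← Zc_add, ← map_add, ← Zc_add, ← map_add]
    congr 2
    ring
  calc ∑ a : L, (∑ x : L, Zc p (Algebra.trace (ZMod p) L (x ^ s - a * x))) *
        Zc p (Algebra.trace (ZMod p) L (a * cc))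
      = ∑ a : L, ∑ x : L, Zc p (Algebra.trace (ZMod p) L (x ^ s)) *
          Zc p (Algebra.trace (ZMod p) L (a * (cc - x))) := by
        apply Finset.sum_congr rfl
        intro a _
        rw [Finset.sum_mul]
        exact Finset.sum_congr rfl fun x _ => step1 a x
    _ = ∑ x : L, Zc p (Algebra.trace (ZMod p) L (x ^ s)) *
          ∑ a : L, Zc p (Algebra.trace (ZMod p) L (a * (cc - x))) := by
        rw [Finset.sum_comm]
        exact Finset.sum_congr rfl fun x _ => (Finset.mul_sum _ _ _).symm
    _ = (Fintype.card L : ℂ) * Zc p (Algebra.trace (ZMod p) L (cc ^ s)) := by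
        rw [Finset.sum_eq_single cc]
        · simp [Zc_zero, mul_comm]
        · intro x _ hx
          rw [orth p L (cc - x) (sub_ne_zero.mpr (Ne.symm hx)), mul_zero]
        · intro h; exact absurd (Finset.mem_univ cc) h

end WeilAux


section MainAux
variable (p : ℕ) [Fact p.Prime] (L : Type*) [Field L] [Fintype L] [CharP L p]
  [Algebra (ZMod p) L]

lemma fiber_decomp (s : ℕ) (a : L) (g : ZMod p → ℂ) [DecidableEq (ZMod p)] :
    ∑ x : L, g (Algebra.trace (ZMod p) L (x ^ s - a * x)) =
      ∑ j : ZMod p,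
        ((Finset.univ.filter (fun x : L => Algebra.trace (ZMod p) L (x ^ s - a * x) = j)).card
          : ℂ) * g j := by
  rw [← Finset.sum_fiberwise' Finset.univ (fun x : L => Algebra.trace (ZMod p) L (x ^ s - a * x))
    g]
  apply Finset.sum_congr rfl
  intro j _
  rw [Finset.sum_const, nsmul_eq_mul]

lemma aux_forward (s : ℕ) (hs : (s : ZMod (p - 1)) = 1) (a : L) :
    ∃ n : ℤ, ∑ x : L, Zc p (Algebra.trace (ZMod p) L (x ^ s - a * x)) = (n : ℂ) := by
  classical
  have hp : p.Prime := Fact.out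
  have hdvd : ((p - 1 : ℕ) : ℤ) ∣ (s : ℤ) - 1 := by
    apply (ZMod.intCast_zmod_eq_zero_iff_dvd _ _).mp
    push_cast
    rw [hs]
    ring
  obtain ⟨k, hk⟩ := hdvd
  have hpow : ∀ j : ZMod p, j ≠ 0 →
      (algebraMap (ZMod p) L j) ^ s = algebraMap (ZMod p) L j := by
    intro j hj
    have hw : algebraMap (ZMod p) L j ≠ 0 := fun h =>
      hj ((map_eq_zero (algebraMap (ZMod p) L)).mp h)
    set u : Lˣ := Units.mk0 _ hw with hu
    have hu1 : u ^ (p - 1) = 1 := by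
      apply Units.ext
      show (algebraMap (ZMod p) L j) ^ (p - 1) = 1
      rw [← map_pow, ZMod.pow_card_sub_one_eq_one hj, map_one]
    have h2 : u ^ ((s : ℤ) - 1) = 1 := by
      rw [hk, zpow_mul, zpow_natCast, hu1, one_zpow]
    have hus : u ^ (s : ℤ) = u := by
      calc u ^ (s : ℤ) = u ^ ((s : ℤ) - 1) * u ^ (1 : ℤ) := by
            rw [← zpow_add]; norm_num
        _ = u := by rw [h2, one_mul, zpow_one]
    rw [zpow_natCast] at hus
    have := congrArg Units.val hus
    simpa [Units.val_pow_eq_pow_val, hu] using this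
  set F : ZMod p → Finset L :=
    fun j => Finset.univ.filter (fun x : L => Algebra.trace (ZMod p) L (x ^ s - a * x) = j)
    with hF
  have hcard : ∀ j : ZMod p, j ≠ 0 → (F j).card = (F 1).card := by
    intro j hj
    apply Finset.card_bij' (fun (y : L) _ => algebraMap (ZMod p) L j⁻¹ * y)
      (fun (x : L) _ => algebraMap (ZMod p) L j * x)
    · intro y hy
      rw [hF, Finset.mem_filter] at hy ⊢
      refine ⟨Finset.mem_univ _, ?_⟩
      have hmul : (algebraMap (ZMod p) L j⁻¹ * y) ^ s - a * (algebraMap (ZMod p) L j⁻¹ * y) =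
          algebraMap (ZMod p) L j⁻¹ * (y ^ s - a * y) := by
        rw [mul_pow, hpow j⁻¹ (inv_ne_zero hj)]
        ring
      rw [hmul, trace_algebraMap_mul, hy.2, inv_mul_cancel₀ hj]
    · intro x hx
      rw [hF, Finset.mem_filter] at hx ⊢
      refine ⟨Finset.mem_univ _, ?_⟩
      have hmul : (algebraMap (ZMod p) L j * x) ^ s - a * (algebraMap (ZMod p) L j * x) =
          algebraMap (ZMod p) L j * (x ^ s - a * x) := by
        rw [mul_pow, hpow j hj]
        ring
      rw [hmul, trace_algebraMap_mul, hx.2, mul_one]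
    · intro y _
      rw [← mul_assoc, ← map_mul, mul_inv_cancel₀ hj, map_one, one_mul]
    · intro x _
      rw [← mul_assoc, ← map_mul, inv_mul_cancel₀ hj, map_one, one_mul]
  refine ⟨((F 0).card : ℤ) - ((F 1).card : ℤ), ?_⟩
  rw [fiber_decomp p L s a (Zc p)]
  rw [← Finset.add_sum_erase Finset.univ _ (Finset.mem_univ (0 : ZMod p))]
  have herase : ∑ j ∈ Finset.univ.erase (0 : ZMod p), ((F j).card : ℂ) * Zc p j =
      ((F 1).card : ℂ) * ∑ j ∈ Finset.univ.erase (0 : ZMod p), Zc p j := by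
    rw [Finset.mul_sum]
    apply Finset.sum_congr rfl
    intro j hj
    rw [hcard j (Finset.mem_erase.mp hj).1]
  rw [herase, sum_Zc_erase, Zc_zero]
  push_cast
  ring

lemma aux_converse (s : ℕ) (hcop : Nat.Coprime s (Fintype.card L - 1))
    (h : ∀ a : L, ∃ n : ℤ,
      ∑ x : L, Zc p (Algebra.trace (ZMod p) L (x ^ s - a * x)) = (n : ℂ)) :
    (s : ZMod (p - 1)) = 1 := by
  classical
  have hp : p.Prime := Fact.out
  have hcardU : Nat.card Lˣ = Fintype.card L - 1 := by
    rw [Nat.card_eq_fintype_card, Fintype.card_units]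
  have hcop' : Nat.Coprime (Nat.card Lˣ) s := by rw [hcardU]; exact hcop.symm
  -- Step 0: surjectivity of s-th power on units
  have hpowsurj : ∀ w : Lˣ, ∃ e : Lˣ, e ^ s = w := fun w =>
    ⟨(powCoprime hcop').symm w, (powCoprime hcop').apply_symm_apply w⟩
  -- key: every unit r of ZMod p satisfies r ^ (s - 1) = 1
  have key : ∀ r : (ZMod p)ˣ, r ^ ((s : ℤ) - 1) = 1 := by
    intro r
    set rU : Lˣ := Units.map (algebraMap (ZMod p) L : ZMod p →* L) r with hrU
    obtain ⟨e, he⟩ := hpowsurj rU⁻¹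
    set d : L := ((rU * e : Lˣ) : L) with hd
    have hd0 : d ≠ 0 := (rU * e).ne_zero
    have heLs : ((e : Lˣ) : L) ^ s = ((rU : Lˣ) : L)⁻¹ := by
      have := congrArg Units.val he
      simpa [Units.val_pow_eq_pow_val] using this
    have hrL0 : ((rU : Lˣ) : L) ≠ 0 := rU.ne_zero
    -- Step A : W (d * a) = W a for every a
    have stepA : ∀ a : L,
        ∑ y : L, Zc p (Algebra.trace (ZMod p) L (y ^ s - d * a * y)) =
        ∑ x : L, Zc p (Algebra.trace (ZMod p) L (x ^ s - a * x)) := by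
      intro a
      obtain ⟨n, hn⟩ := h a
      set F : ZMod p → Finset L :=
        fun j => Finset.univ.filter (fun x : L => Algebra.trace (ZMod p) L (x ^ s - a * x) = j)
        with hF
      have hdec := fiber_decomp p L s a (Zc p)
      rw [hn] at hdec
      -- coefficients relation
      set c : ZMod p → ℤ := fun j => ((F j).card : ℤ) - if j = 0 then n else 0 with hc
      have hsum0 : ∑ j : ZMod p, (if j = 0 then (n : ℂ) else 0) * Zc p j = n := by
        rw [Finset.sum_eq_single (0 : ZMod p)]
        · rw [if_pos rfl, Zc_zero, mul_one]
        · intro j _ hj; rw [if_neg hj, zero_mul]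
        · intro hnot; exact absurd (Finset.mem_univ _) hnot
      have h2 : ∑ j : ZMod p, (c j : ℂ) * Zc p j = 0 := by
        have : ∀ j : ZMod p, (c j : ℂ) * Zc p j =
            ((F j).card : ℂ) * Zc p j - (if j = 0 then (n : ℂ) else 0) * Zc p j := by
          intro j
          rw [hc]
          by_cases hj : j = 0 <;> simp [hj] <;> ring
        rw [Finset.sum_congr rfl (fun j _ => this j), Finset.sum_sub_distrib, hsum0, ← hdec]
        ring
      have hcc := coeffs_const p c h2
      -- twisted sum equals n
      have hWc : ∑ x : L, Zc p ((r : ZMod p) * Algebra.trace (ZMod p) L (x ^ s - a * x)) = n := by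
        rw [fiber_decomp p L s a (fun j => Zc p ((r : ZMod p) * j))]
        have hsplit : ∀ j : ZMod p, ((F j).card : ℂ) * Zc p ((r : ZMod p) * j) =
            (c j : ℂ) * Zc p ((r : ZMod p) * j) +
              (if j = 0 then (n : ℂ) else 0) * Zc p ((r : ZMod p) * j) := by
          intro j
          rw [hc]
          by_cases hj : j = 0 <;> simp [hj] <;> ring
        rw [Finset.sum_congr rfl (fun j _ => hsplit j), Finset.sum_add_distrib]
        have hzero : ∑ j : ZMod p, (c j : ℂ) * Zc p ((r : ZMod p) * j) = 0 := by
          have hconst : ∀ j : ZMod p, (c j : ℂ) = (c 0 : ℂ) := fun j => by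
            exact_mod_cast congrArg (fun z : ℤ => (z : ℂ)) (hcc j 0)
          rw [Finset.sum_congr rfl (fun j _ => by rw [hconst j])]
          rw [← Finset.mul_sum]
          have : ∑ j : ZMod p, Zc p ((r : ZMod p) * j) = ∑ j : ZMod p, Zc p j :=
            Fintype.sum_equiv (Equiv.mulLeft₀ (r : ZMod p) r.ne_zero)
              (fun j => Zc p ((r : ZMod p) * j)) (fun j => Zc p j) (fun j => rfl)
          rw [this, sum_Zc, mul_zero]
        have hone : ∑ j : ZMod p, (if j = 0 then (n : ℂ) else 0) * Zc p ((r : ZMod p) * j)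
            = n := by
          rw [Finset.sum_eq_single (0 : ZMod p)]
          · rw [if_pos rfl, mul_zero, Zc_zero, mul_one]
          · intro j _ hj; rw [if_neg hj, zero_mul]
          · intro hnot; exact absurd (Finset.mem_univ _) hnot
        rw [hzero, hone, zero_add]
      -- substitution x = e * y
      have hsubst : ∑ x : L, Zc p ((r : ZMod p) * Algebra.trace (ZMod p) L (x ^ s - a * x)) =
          ∑ y : L, Zc p (Algebra.trace (ZMod p) L (y ^ s - d * a * y)) := by
        have hpt : ∀ x : L, (r : ZMod p) * Algebra.trace (ZMod p) L (x ^ s - a * x) =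
            Algebra.trace (ZMod p) L (((rU : Lˣ) : L) * (x ^ s - a * x)) := by
          intro x
          rw [← trace_algebraMap_mul p L (r : ZMod p) (x ^ s - a * x)]
          rfl
        rw [Finset.sum_congr rfl (fun x _ => by rw [hpt x])]
        refine (Fintype.sum_equiv (Equiv.mulLeft₀ ((e : Lˣ) : L) e.ne_zero)
          (fun y => Zc p (Algebra.trace (ZMod p) L (y ^ s - d * a * y)))
          (fun x => Zc p (Algebra.trace (ZMod p) L (((rU : Lˣ) : L) * (x ^ s - a * x)))) ?_).symm
        intro y
        have hE : (Equiv.mulLeft₀ ((e : Lˣ) : L) e.ne_zero) y = ((e : Lˣ) : L) * y := rfl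
        rw [hE]
        have hEq : ((rU : Lˣ) : L) * ((((e : Lˣ) : L) * y) ^ s - a * (((e : Lˣ) : L) * y)) =
            y ^ s - d * a * y := by
          rw [mul_pow, heLs, hd, Units.val_mul]
          field_simp
        show Zc p (Algebra.trace (ZMod p) L (y ^ s - d * a * y)) =
          Zc p (Algebra.trace (ZMod p) L
            (((rU : Lˣ) : L) * ((((e : Lˣ) : L) * y) ^ s - a * (((e : Lˣ) : L) * y))))
        rw [hEq]
      rw [← hsubst, hWc, hn]
    -- Step B: compare Fourier transforms
    have hcard0 : (Fintype.card L : ℂ) ≠ 0 := Nat.cast_ne_zero.mpr Fintype.card_ne_zero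
    have stepB : ∀ cc : L, Zc p (Algebra.trace (ZMod p) L (cc ^ s)) =
        Zc p (Algebra.trace (ZMod p) L (d⁻¹ ^ s * cc ^ s)) := by
      intro cc
      have h1 := fourierW p L s cc
      have h2 := fourierW p L s (d⁻¹ * cc)
      have h3 : ∑ a : L, (∑ x : L, Zc p (Algebra.trace (ZMod p) L (x ^ s - a * x))) *
          Zc p (Algebra.trace (ZMod p) L (a * cc)) =
          ∑ b : L, (∑ x : L, Zc p (Algebra.trace (ZMod p) L (x ^ s - b * x))) *
          Zc p (Algebra.trace (ZMod p) L (b * (d⁻¹ * cc))) := by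
        rw [Finset.sum_congr rfl (fun a _ => by rw [← stepA a] :
          ∀ a ∈ Finset.univ, (∑ x : L, Zc p (Algebra.trace (ZMod p) L (x ^ s - a * x))) *
            Zc p (Algebra.trace (ZMod p) L (a * cc)) =
            (∑ y : L, Zc p (Algebra.trace (ZMod p) L (y ^ s - d * a * y))) *
            Zc p (Algebra.trace (ZMod p) L (a * cc)))]
        apply Fintype.sum_equiv (Equiv.mulLeft₀ d hd0)
          (fun a => (∑ y : L, Zc p (Algebra.trace (ZMod p) L (y ^ s - d * a * y))) *
            Zc p (Algebra.trace (ZMod p) L (a * cc)))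
          (fun b => (∑ x : L, Zc p (Algebra.trace (ZMod p) L (x ^ s - b * x))) *
            Zc p (Algebra.trace (ZMod p) L (b * (d⁻¹ * cc))))
        intro a
        have hE : (Equiv.mulLeft₀ d hd0) a = d * a := rfl
        rw [hE]
        have hEq : d * a * (d⁻¹ * cc) = a * cc := by field_simp
        rw [hEq]
      rw [h3, h2, mul_pow] at h1
      exact (mul_left_cancel₀ hcard0 h1).symm
    -- evaluate at cc with cc ^ s = z where trace z = 1
    obtain ⟨z, hz⟩ := exists_trace_one p L
    have hz0 : z ≠ 0 := by rintro rfl; rw [map_zero] at hz; exact one_ne_zero hz.symm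
    obtain ⟨w, hw⟩ := hpowsurj (Units.mk0 z hz0)
    have hws : ((w : Lˣ) : L) ^ s = z := by
      have := congrArg Units.val hw
      simpa [Units.val_pow_eq_pow_val] using this
    have hB := stepB ((w : Lˣ) : L)
    rw [hws] at hB
    -- identify d⁻¹ ^ s with the image of r ^ (1 - s)
    have hU : ((rU * e)⁻¹) ^ s = Units.map (algebraMap (ZMod p) L : ZMod p →* L)
        (r ^ ((1 : ℤ) - s)) := by
      have hA : ((rU * e)⁻¹) ^ s = rU⁻¹ ^ s * rU := by
        rw [mul_inv, mul_pow, inv_pow e s, he, inv_inv]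
      rw [hA, map_zpow, ← hrU, inv_pow, ← zpow_natCast rU s, ← zpow_neg,
        show ((1 : ℤ) - s) = -(s : ℤ) + 1 by ring, zpow_add, zpow_one]
    have hdinv : d⁻¹ ^ s =
        algebraMap (ZMod p) L ((r ^ ((1 : ℤ) - s) : (ZMod p)ˣ) : ZMod p) := by
      calc d⁻¹ ^ s = ((((rU * e)⁻¹ : Lˣ) : L)) ^ s := by
            rw [hd, ← Units.val_inv_eq_inv_val]
        _ = ((((rU * e)⁻¹) ^ s : Lˣ) : L) := by rw [Units.val_pow_eq_pow_val]
        _ = algebraMap (ZMod p) L ((r ^ ((1 : ℤ) - s) : (ZMod p)ˣ) : ZMod p) := by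
            rw [hU]; rfl
    rw [hdinv, trace_algebraMap_mul, hz, mul_one] at hB
    -- conclude the unit is 1
    have hval : ((r ^ ((1 : ℤ) - s) : (ZMod p)ˣ) : ZMod p).val = (1 : ZMod p).val := by
      refine (zetaC_prim p).pow_inj (ZMod.val_lt _) (ZMod.val_lt _) ?_
      exact hB.symm
    have hu1 : ((r ^ ((1 : ℤ) - s) : (ZMod p)ˣ) : ZMod p) = 1 := by
      have h1 : ((((r ^ ((1 : ℤ) - s) : (ZMod p)ˣ) : ZMod p).val : ℕ) : ZMod p) =
          (((1 : ZMod p).val : ℕ) : ZMod p) := congrArg _ hval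
      exact (ZMod.natCast_rightInverse _).symm.trans
        (h1.trans (ZMod.natCast_rightInverse _))
    have hunit : (r ^ ((1 : ℤ) - s) : (ZMod p)ˣ) = 1 := Units.ext (by rw [hu1]; rfl)
    rw [show (s : ℤ) - 1 = -((1 : ℤ) - s) by ring, zpow_neg, hunit, inv_one]
  -- conclude from cyclicity
  obtain ⟨g, hg⟩ := IsCyclic.exists_generator (α := (ZMod p)ˣ)
  have hord : orderOf g = p - 1 := by
    rw [orderOf_eq_card_of_forall_mem_zpowers hg, Nat.card_eq_fintype_card,
      ZMod.card_units_eq_totient, Nat.totient_prime hp]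
  have hdvd : ((p - 1 : ℕ) : ℤ) ∣ (s : ℤ) - 1 := by
    rw [← hord]
    exact orderOf_dvd_iff_zpow_eq_one.mpr (key g)
  have h0 : (((s : ℤ) - 1 : ℤ) : ZMod (p - 1)) = 0 :=
    (ZMod.intCast_zmod_eq_zero_iff_dvd _ _).mpr hdvd
  push_cast at h0
  exact sub_eq_zero.mp h0

end MainAux

theorem stmt_5 (p : ℕ) [Fact p.Prime] (L : Type*) [Field L] [Fintype L] [CharP L p]
    [Algebra (ZMod p) L] (s : ℕ) (hcop : Nat.Coprime s (Fintype.card L - 1)) :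
    (∀ a : L, ∃ n : ℤ, ∑ x : L, mu p (x ^ s - a * x) = (n : ℂ)) ↔
      (s : ZMod (p - 1)) = 1 := by
  have hmu : ∀ a : L, (∑ x : L, mu p (x ^ s - a * x)) =
      ∑ x : L, Zc p (Algebra.trace (ZMod p) L (x ^ s - a * x)) :=
    fun a => Finset.sum_congr rfl fun x _ => mu_eq_Zc p _
  constructor
  · intro h
    refine aux_converse p L s hcop (fun a => ?_)
    obtain ⟨n, hn⟩ := h a
    exact ⟨n, by rw [← hmu a]; exact hn⟩
  · intro hs a
    obtain ⟨n, hn⟩ := aux_forward p L s hs a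
    exact ⟨n, by rw [hmu a]; exact hn⟩
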